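/- Let H be a 3-uniform hypergraph with no linear cycle and let abc ∈ E(H) be a thick hyperedge with exactly one strongly associated vertex. If w_1,...,w_m are the vertices weakly associated to abc, then all supports s_{abc}(w_i) are equal, i.e., there is a single pair {x,y} ⊂ {a,b,c} such that for every i, w_i{x,y} is the unique supporting hyperedge of w_i in abc. -/
import Mathlib


/-- A linear cycle of length `k ≥ 3` in a 3-uniform hypergraph with edge set `E`:
an alternating cyclic sequence of distinct vertices `v i` and distinct hyperedges `h i`
with `h i ∩ h (i+1) = {v (i+1)}` and non-consecutive hyperedges disjoint. -/
def IsLinearCycle {V : Type*} [DecidableEq V] (E : Finset (Finset V)) (k : ℕ)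
    (v : ZMod k → V) (h : ZMod k → Finset V) : Prop :=
  3 ≤ k ∧ Function.Injective v ∧ Function.Injective h ∧
    (∀ i, h i ∈ E) ∧ (∀ i, h i ∩ h (i + 1) = {v (i + 1)}) ∧
    (∀ i j, i ≠ j → i + 1 ≠ j → j + 1 ≠ i → h i ∩ h j = ∅)

/-- `E` contains a linear cycle. -/
def HasLinearCycle {V : Type*} [DecidableEq V] (E : Finset (Finset V)) : Prop :=
  ∃ (k : ℕ) (v : ZMod k → V) (h : ZMod k → Finset V), IsLinearCycle E k v h

/-- The degree of a vertex: the number of hyperedges containing it. -/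
def hDegree {V : Type*} [DecidableEq V] (E : Finset (Finset V)) (v : V) : ℕ :=
  (E.filter (fun e => v ∈ e)).card

/-- The support of a vertex `v` in a hyperedge `h`: the pairs of `h` that form a
hyperedge together with `v`. -/
def hSupport {V : Type*} [DecidableEq V] (E : Finset (Finset V)) (h : Finset V) (v : V) :
    Finset (Finset V) :=
  (h.powersetCard 2).filter (fun p => insert v p ∈ E)

/-- A pair of vertices is thick if at least two hyperedges contain it. -/
def ThickPair {V : Type*} [DecidableEq V] (E : Finset (Finset V)) (a b : V) : Prop :=
  2 ≤ (E.filter (fun e => a ∈ e ∧ b ∈ e)).card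

/-- A hyperedge is thick if each of its pairs is contained in at least two hyperedges. -/
def ThickEdge {V : Type*} [DecidableEq V] (E : Finset (Finset V)) (h : Finset V) : Prop :=
  ∀ p ∈ h.powersetCard 2, 2 ≤ (E.filter (fun e => p ⊆ e)).card

/-- `v ∉ h` is strongly associated to the hyperedge `h` if at least two of the 3-sets
formed by `v` and a pair of `h` are hyperedges. -/
def StronglyAssoc {V : Type*} [DecidableEq V] (E : Finset (Finset V)) (h : Finset V) (v : V) :
    Prop :=
  v ∉ h ∧ 2 ≤ (hSupport E h v).card

/-- A linear path of length `k` (given by its sequence of hyperedges): consecutive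
hyperedges meet in exactly one vertex, non-consecutive ones are disjoint. -/
def IsLinearPath {V : Type*} [DecidableEq V] (E : Finset (Finset V)) (k : ℕ)
    (h : Fin k → Finset V) : Prop :=
  Function.Injective h ∧ (∀ i, h i ∈ E) ∧
    (∀ i j : Fin k, (i : ℕ) + 1 = (j : ℕ) → (h i ∩ h j).card = 1) ∧
    (∀ i j : Fin k, (i : ℕ) + 2 ≤ (j : ℕ) → h i ∩ h j = ∅)

/-- A linear tree with vertex set `S` and edge set `T`: built from a single vertex by
repeatedly adding hyperedges meeting the current vertex set in exactly one vertex. -/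
inductive IsLinearTree {V : Type*} [DecidableEq V] : Finset V → Finset (Finset V) → Prop
  | single (v : V) : IsLinearTree {v} ∅
  | extend {S : Finset V} {T : Finset (Finset V)} (e : Finset V) :
      IsLinearTree S T → e.card = 3 → (e ∩ S).card = 1 → IsLinearTree (S ∪ e) (insert e T)

set_option maxHeartbeats 2000000 in
/-- If a thick hyperedge `abc` of a linear-cycle-free hypergraph has exactly one
strongly associated vertex, then all weakly associated vertices have the same support. -/
theorem weak_supports_equal {V : Type*} [DecidableEq V] (E : Finset (Finset V))
    (h3 : ∀ e ∈ E, e.card = 3) (hcyc : ¬ HasLinearCycle E) (a b c : V)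
    (habc : ({a, b, c} : Finset V) ∈ E) (hthick : ThickEdge E {a, b, c})
    (hstrong : ∃! v : V, StronglyAssoc E {a, b, c} v) :
    ∀ w₁ w₂ : V, w₁ ∉ ({a, b, c} : Finset V) → w₂ ∉ ({a, b, c} : Finset V) →
      (hSupport E {a, b, c} w₁).card = 1 → (hSupport E {a, b, c} w₂).card = 1 →
      hSupport E {a, b, c} w₁ = hSupport E {a, b, c} w₂ := by
  intro w₁ w₂ hw₁ hw₂ hc₁ hc₂
  by_contra hne
  obtain ⟨p₁, hp₁⟩ := Finset.card_eq_one.mp hc₁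
  obtain ⟨p₂, hp₂⟩ := Finset.card_eq_one.mp hc₂
  have hm₁ : p₁ ∈ hSupport E {a, b, c} w₁ := hp₁ ▸ Finset.mem_singleton_self p₁
  have hm₂ : p₂ ∈ hSupport E {a, b, c} w₂ := hp₂ ▸ Finset.mem_singleton_self p₂
  rw [hSupport, Finset.mem_filter, Finset.mem_powersetCard] at hm₁ hm₂
  obtain ⟨⟨hp₁S, hp₁c⟩, hE₁⟩ := hm₁
  obtain ⟨⟨hp₂S, hp₂c⟩, hE₂⟩ := hm₂
  have hpne : p₁ ≠ p₂ := fun h => hne (by rw [hp₁, hp₂, h])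
  have hw12 : w₁ ≠ w₂ := fun h => hne (by rw [h])
  have hScard : ({a, b, c} : Finset V).card = 3 := h3 _ habc
  obtain ⟨y, hy⟩ : (p₁ ∩ p₂).Nonempty := by
    rw [← Finset.card_pos]
    have h1 := Finset.card_union_add_card_inter p₁ p₂
    have h2 : (p₁ ∪ p₂).card ≤ 3 :=
      hScard ▸ Finset.card_le_card (Finset.union_subset hp₁S hp₂S)
    omega
  rw [Finset.mem_inter] at hy
  obtain ⟨x, hxp₁, hxp₂⟩ : ∃ x ∈ p₁, x ∉ p₂ := by
    by_contra h
    push_neg at h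
    exact hpne (Finset.eq_of_subset_of_card_le (fun u hu => h u hu) (by omega))
  obtain ⟨z, hzp₂, hzp₁⟩ : ∃ z ∈ p₂, z ∉ p₁ := by
    by_contra h
    push_neg at h
    exact hpne (Finset.eq_of_subset_of_card_le (fun u hu => h u hu) (by omega)).symm
  have hxy : x ≠ y := fun h => hxp₂ (h ▸ hy.2)
  have hzy : z ≠ y := fun h => hzp₁ (h ▸ hy.1)
  have hyz : y ≠ z := hzy.symm
  have hxz : x ≠ z := fun h => hxp₂ (h ▸ hzp₂)
  have hp₁eq : p₁ = {x, y} := by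
    refine (Finset.eq_of_subset_of_card_le ?_ ?_).symm
    · intro u hu
      rcases Finset.mem_insert.mp hu with rfl | hu
      · exact hxp₁
      · exact (Finset.mem_singleton.mp hu) ▸ hy.1
    · rw [hp₁c, Finset.card_insert_of_notMem (by simp [hxy]), Finset.card_singleton]
  have hp₂eq : p₂ = {y, z} := by
    refine (Finset.eq_of_subset_of_card_le ?_ ?_).symm
    · intro u hu
      rcases Finset.mem_insert.mp hu with rfl | hu
      · exact hy.2
      · exact (Finset.mem_singleton.mp hu) ▸ hzp₂
    · rw [hp₂c, Finset.card_insert_of_notMem (by simp [hyz]), Finset.card_singleton]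
  have hxyzcard : ({x, y, z} : Finset V).card = 3 := by
    rw [Finset.card_insert_of_notMem (by simp [hxy, hxz]),
      Finset.card_insert_of_notMem (by simp [hyz]), Finset.card_singleton]
  have hSeq : ({a, b, c} : Finset V) = {x, y, z} := by
    refine (Finset.eq_of_subset_of_card_le ?_ ?_).symm
    · intro u hu
      rcases Finset.mem_insert.mp hu with rfl | hu
      · exact hp₁S hxp₁
      · rcases Finset.mem_insert.mp hu with rfl | hu
        · exact hp₁S hy.1
        · exact (Finset.mem_singleton.mp hu) ▸ hp₂S hzp₂
    · rw [hScard, hxyzcard]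
  rw [hSeq, Finset.mem_insert, Finset.mem_insert, Finset.mem_singleton] at hw₁ hw₂
  push_neg at hw₁ hw₂
  obtain ⟨hw₁x, hw₁y, hw₁z⟩ := hw₁
  obtain ⟨hw₂x, hw₂y, hw₂z⟩ := hw₂
  have hxzmem : ({x, z} : Finset V) ∈ ({a, b, c} : Finset V).powersetCard 2 := by
    rw [Finset.mem_powersetCard]
    constructor
    · intro u hu
      rcases Finset.mem_insert.mp hu with rfl | hu
      · exact hp₁S hxp₁
      · exact (Finset.mem_singleton.mp hu) ▸ hp₂S hzp₂
    · rw [Finset.card_insert_of_notMem (by simp [hxz]), Finset.card_singleton]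
  have hth := hthick _ hxzmem
  obtain ⟨e, he, hene⟩ :=
    Finset.exists_mem_ne (lt_of_lt_of_le one_lt_two hth) ({a, b, c} : Finset V)
  rw [Finset.mem_filter] at he
  obtain ⟨heE, hsub⟩ := he
  have hecard := h3 e heE
  obtain ⟨t, ht⟩ : (e \ ({x, z} : Finset V)).Nonempty := by
    rw [← Finset.card_pos, Finset.card_sdiff_of_subset hsub,
      Finset.card_insert_of_notMem (by simp [hxz]), Finset.card_singleton, hecard]
    omega
  rw [Finset.mem_sdiff, Finset.mem_insert, Finset.mem_singleton] at ht
  obtain ⟨hte, htxz⟩ := ht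
  push_neg at htxz
  obtain ⟨htx, htz⟩ := htxz
  have hxztcard : ({x, z, t} : Finset V).card = 3 := by
    rw [Finset.card_insert_of_notMem (by simp [hxz, htx.symm]),
      Finset.card_insert_of_notMem (by simp [htz.symm]), Finset.card_singleton]
  have heeq : e = {x, z, t} := by
    refine (Finset.eq_of_subset_of_card_le ?_ ?_).symm
    · intro u hu
      rcases Finset.mem_insert.mp hu with rfl | hu
      · exact hsub (by simp)
      · rcases Finset.mem_insert.mp hu with rfl | hu
        · exact hsub (by simp)
        · exact (Finset.mem_singleton.mp hu) ▸ hte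
    · rw [hecard, hxztcard]
  have hty : t ≠ y := by
    rintro rfl
    apply hene
    rw [heeq, hSeq]
    ext u
    simp only [Finset.mem_insert, Finset.mem_singleton]
    tauto
  have htw₁ : t ≠ w₁ := by
    intro hteq
    have hins : insert w₁ ({x, z} : Finset V) = e := by
      rw [heeq]
      ext u
      simp only [Finset.mem_insert, Finset.mem_singleton, hteq]
      tauto
    have hmem : ({x, z} : Finset V) ∈ hSupport E {a, b, c} w₁ := by
      rw [hSupport, Finset.mem_filter]
      refine ⟨hxzmem, ?_⟩
      rw [hins]
      exact heE
    rw [hp₁, Finset.mem_singleton, hp₁eq] at hmem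
    have : z ∈ ({x, y} : Finset V) := hmem ▸ (by simp : z ∈ ({x, z} : Finset V))
    simp only [Finset.mem_insert, Finset.mem_singleton] at this
    rcases this with h | h
    · exact hxz h.symm
    · exact hzy h
  have htw₂ : t ≠ w₂ := by
    intro hteq
    have hins : insert w₂ ({x, z} : Finset V) = e := by
      rw [heeq]
      ext u
      simp only [Finset.mem_insert, Finset.mem_singleton, hteq]
      tauto
    have hmem : ({x, z} : Finset V) ∈ hSupport E {a, b, c} w₂ := by
      rw [hSupport, Finset.mem_filter]
      refine ⟨hxzmem, ?_⟩
      rw [hins]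
      exact heE
    rw [hp₂, Finset.mem_singleton, hp₂eq] at hmem
    have : x ∈ ({y, z} : Finset V) := hmem ▸ (by simp : x ∈ ({x, z} : Finset V))
    simp only [Finset.mem_insert, Finset.mem_singleton] at this
    rcases this with h | h
    · exact hxy h
    · exact hxz h
  have hE₁' : ({w₁, x, y} : Finset V) ∈ E := by rw [hp₁eq] at hE₁; exact hE₁
  have hE₂' : ({w₂, y, z} : Finset V) ∈ E := by rw [hp₂eq] at hE₂; exact hE₂
  have hE₃' : ({x, z, t} : Finset V) ∈ E := heeq ▸ heE
  -- intersections
  have i1 : ({w₁, x, y} : Finset V) ∩ {w₂, y, z} = {y} := by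
    ext u
    simp only [Finset.mem_inter, Finset.mem_insert, Finset.mem_singleton]
    constructor
    · rintro ⟨rfl | rfl | rfl, h | h | h⟩ <;> simp_all
    · rintro rfl
      exact ⟨Or.inr (Or.inr rfl), Or.inr (Or.inl rfl)⟩
  have i2 : ({w₂, y, z} : Finset V) ∩ {x, z, t} = {z} := by
    ext u
    simp only [Finset.mem_inter, Finset.mem_insert, Finset.mem_singleton]
    constructor
    · rintro ⟨rfl | rfl | rfl, h | h | h⟩ <;> simp_all
    · rintro rfl
      exact ⟨Or.inr (Or.inr rfl), Or.inr (Or.inl rfl)⟩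
  have i3 : ({x, z, t} : Finset V) ∩ {w₁, x, y} = {x} := by
    ext u
    simp only [Finset.mem_inter, Finset.mem_insert, Finset.mem_singleton]
    constructor
    · rintro ⟨rfl | rfl | rfl, h | h | h⟩ <;> simp_all
    · rintro rfl
      exact ⟨Or.inl rfl, Or.inr (Or.inl rfl)⟩
  have hE12 : ({w₁, x, y} : Finset V) ≠ {w₂, y, z} := by
    intro h
    have : w₁ ∈ ({w₂, y, z} : Finset V) := h ▸ Finset.mem_insert_self _ _
    simp only [Finset.mem_insert, Finset.mem_singleton] at this
    tauto
  have hE13 : ({w₁, x, y} : Finset V) ≠ {x, z, t} := by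
    intro h
    have : w₁ ∈ ({x, z, t} : Finset V) := h ▸ Finset.mem_insert_self _ _
    simp only [Finset.mem_insert, Finset.mem_singleton] at this
    rcases this with h | h | h
    · exact hw₁x h
    · exact hw₁z h
    · exact htw₁ h.symm
  have hE23 : ({w₂, y, z} : Finset V) ≠ {x, z, t} := by
    intro h
    have : w₂ ∈ ({x, z, t} : Finset V) := h ▸ Finset.mem_insert_self _ _
    simp only [Finset.mem_insert, Finset.mem_singleton] at this
    rcases this with h | h | h
    · exact hw₂x h
    · exact hw₂z h
    · exact htw₂ h.symm
  have hcases : ∀ i : ZMod 3, i = 0 ∨ i = 1 ∨ i = 2 := by decide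
  have n10 : (1 : ZMod 3) ≠ 0 := by decide
  have n20 : (2 : ZMod 3) ≠ 0 := by decide
  have n21 : (2 : ZMod 3) ≠ 1 := by decide
  have a01 : (0 : ZMod 3) + 1 = 1 := by decide
  have a12 : (1 : ZMod 3) + 1 = 2 := by decide
  have a20 : (2 : ZMod 3) + 1 = 0 := by decide
  apply hcyc
  refine ⟨3, fun i => if i = 0 then x else if i = 1 then y else z,
    fun i => if i = 0 then ({w₁, x, y} : Finset V)
      else if i = 1 then {w₂, y, z} else {x, z, t},
    le_refl 3, ?_, ?_, ?_, ?_, ?_⟩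
  · intro i j hij
    rcases hcases i with rfl | rfl | rfl <;> rcases hcases j with rfl | rfl | rfl <;>
      simp only [n10, n20, n21, reduceIte, if_false, ite_false] at hij <;>
      first
        | rfl
        | exact absurd hij hxy
        | exact absurd hij hxz
        | exact absurd hij hxy.symm
        | exact absurd hij hyz
        | exact absurd hij hxz.symm
        | exact absurd hij hyz.symm
  · intro i j hij
    rcases hcases i with rfl | rfl | rfl <;> rcases hcases j with rfl | rfl | rfl <;>
      simp only [n10, n20, n21, reduceIte, if_false, ite_false] at hij <;>
      first
        | rfl
        | exact absurd hij hE12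
        | exact absurd hij hE13
        | exact absurd hij hE12.symm
        | exact absurd hij hE23
        | exact absurd hij hE13.symm
        | exact absurd hij hE23.symm
  · intro i
    rcases hcases i with rfl | rfl | rfl <;>
      simp only [n10, n20, n21, reduceIte, if_false, ite_false]
    · exact hE₁'
    · exact hE₂'
    · exact hE₃'
  · intro i
    rcases hcases i with rfl | rfl | rfl
    · rw [a01]
      simp only [n10, n20, n21, reduceIte, if_false, ite_false]
      exact i1
    · rw [a12]
      simp only [n10, n20, n21, reduceIte, if_false, ite_false]
      exact i2
    · rw [a20]
      simp only [n10, n20, n21, reduceIte, if_false, ite_false]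
      exact i3
  · intro i j h1 h2 h3'
    exfalso
    rcases hcases i with rfl | rfl | rfl <;> rcases hcases j with rfl | rfl | rfl <;>
      first
        | exact h1 rfl
        | exact h2 (by decide)
        | exact h3' (by decide)
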